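/- Let n ≥ 1, let f : ℝ → ℝ be a monotone (nondecreasing or nonincreasing) convex function, and let A, B be n×n Hermitian complex matrices. Then there exists an n×n unitary matrix U such that f((A+B)/2) ≤ U · ((f(A)+f(B))/2) · U* in the Loewner order. (Result 1.4.) -/
import Mathlib

open Matrix ComplexOrder

namespace BourinAux

variable {n : ℕ}

noncomputable def nrm2 (x : Fin n → ℂ) : ℝ := ∑ i, Complex.normSq (x i)

lemma dot_self (x : Fin n → ℂ) : star x ⬝ᵥ x = (nrm2 x : ℂ) := by
  simp only [dotProduct, Pi.star_apply, nrm2, Complex.ofReal_sum]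
  refine Finset.sum_congr rfl fun i _ => ?_
  rw [Complex.star_def, ← Complex.normSq_eq_conj_mul_self]

lemma quad (V : Matrix (Fin n) (Fin n) ℂ) (hV : Vᴴ * V = 1) (g : Fin n → ℝ) (c : Fin n → ℂ) :
    star (V *ᵥ c) ⬝ᵥ ((V * diagonal (Complex.ofReal ∘ g) * Vᴴ) *ᵥ (V *ᵥ c))
      = ((∑ i, g i * Complex.normSq (c i) : ℝ) : ℂ) := by
  rw [mulVec_mulVec, mul_assoc, mul_assoc, hV, mul_one, star_mulVec, dotProduct_mulVec,
    vecMul_vecMul, ← mul_assoc, hV, one_mul]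
  simp only [vecMul_diagonal, dotProduct, Pi.star_apply, Complex.ofReal_sum]
  refine Finset.sum_congr rfl fun i _ => ?_
  rw [Complex.ofReal_mul]
  have : (starRingEnd ℂ) (c i) * c i = (Complex.normSq (c i) : ℂ) := by
    rw [mul_comm, Complex.mul_conj]
  calc star (c i) * Complex.ofReal (g i) * c i
      = Complex.ofReal (g i) * (star (c i) * c i) := by ring
    _ = _ := by rw [Complex.star_def, this]

lemma dot_mulVec_self (V : Matrix (Fin n) (Fin n) ℂ) (hV : Vᴴ * V = 1) (c : Fin n → ℂ) :
    star (V *ᵥ c) ⬝ᵥ (V *ᵥ c) = star c ⬝ᵥ c := by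
  rw [star_mulVec, dotProduct_mulVec, vecMul_vecMul, hV, vecMul_one]

lemma nrm2_mulVec (V : Matrix (Fin n) (Fin n) ℂ) (hV : Vᴴ * V = 1) (c : Fin n → ℂ) :
    nrm2 (V *ᵥ c) = nrm2 c := by
  have := dot_mulVec_self V hV c
  rw [dot_self, dot_self] at this
  exact_mod_cast this


lemma conj_perm (V : Matrix (Fin n) (Fin n) ℂ) (d : Fin n → ℂ) (σ : Equiv.Perm (Fin n)) :
    (V.submatrix id ⇑σ) * diagonal (d ∘ ⇑σ) * (V.submatrix id ⇑σ)ᴴ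
      = V * diagonal d * Vᴴ := by
  rw [conjTranspose_submatrix, ← submatrix_diagonal d ⇑σ σ.injective,
    submatrix_mul_equiv V (diagonal d) id σ ⇑σ,
    submatrix_mul_equiv (V * diagonal d) Vᴴ id σ id]
  simp

lemma perm_unitary {V : Matrix (Fin n) (Fin n) ℂ} (hV : V ∈ Matrix.unitaryGroup (Fin n) ℂ)
    (σ : Equiv.Perm (Fin n)) : V.submatrix id ⇑σ ∈ Matrix.unitaryGroup (Fin n) ℂ := by
  rw [Matrix.mem_unitaryGroup_iff] at hV ⊢
  rw [star_eq_conjTranspose, conjTranspose_submatrix,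
    submatrix_mul_equiv V Vᴴ id σ id, ← star_eq_conjTranspose, hV]
  simp

/-- Spectral theorem with the eigenvalues permuted by `σ`, simultaneously for all `cfc g`. -/
lemma perm_spectral {M : Matrix (Fin n) (Fin n) ℂ} (hM : M.IsHermitian)
    (σ : Equiv.Perm (Fin n)) :
    ∃ V ∈ Matrix.unitaryGroup (Fin n) ℂ,
      ∀ g : ℝ → ℝ, cfc g M =
        V * diagonal (Complex.ofReal ∘ g ∘ (hM.eigenvalues ∘ ⇑σ)) * Vᴴ := by
  refine ⟨(hM.eigenvectorUnitary : Matrix (Fin n) (Fin n) ℂ).submatrix id ⇑σ,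
    perm_unitary hM.eigenvectorUnitary.2 σ, fun g => ?_⟩
  have h1 : Complex.ofReal ∘ g ∘ (hM.eigenvalues ∘ ⇑σ)
      = (Complex.ofReal ∘ g ∘ hM.eigenvalues) ∘ ⇑σ := rfl
  rw [h1, conj_perm, hM.cfc_eq, Matrix.IsHermitian.cfc, ← star_eq_conjTranspose]
  rfl


lemma exists_good_vector (hn : 1 ≤ n) (M : Matrix (Fin n) (Fin n) ℂ) (k : Fin n) :
    ∃ c : Fin n → ℂ, c ≠ 0 ∧ (∀ i, i < k → c i = 0) ∧ ∀ j, k < j → (M *ᵥ c) j = 0 := by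
  classical
  set φ : {i : Fin n // i ≠ k} → ((Fin n → ℂ) →ₗ[ℂ] ℂ) := fun i =>
    if (i : Fin n) < k then LinearMap.proj (i : Fin n)
    else (LinearMap.proj (i : Fin n)).comp M.mulVecLin with hφ
  set L : (Fin n → ℂ) →ₗ[ℂ] ({i : Fin n // i ≠ k} → ℂ) := LinearMap.pi φ with hL
  have hcard : Fintype.card {i : Fin n // i ≠ k} = n - 1 := by
    have := Fintype.card_subtype_compl (fun i : Fin n => i = k)
    simpa [Fintype.card_subtype_eq] using this
  have hni : ¬ Function.Injective L := by
    intro hinj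
    have := LinearMap.finrank_le_finrank_of_injective hinj
    rw [Module.finrank_pi, Module.finrank_pi, hcard, Fintype.card_fin] at this
    omega
  rw [Function.not_injective_iff] at hni
  obtain ⟨a, b, hab, hne⟩ := hni
  refine ⟨a - b, sub_ne_zero.mpr hne, ?_, ?_⟩
  · intro i hik
    have h0 : L (a - b) = 0 := by rw [map_sub, hab, sub_self]
    have := congrFun h0 ⟨i, hik.ne⟩
    simpa [hL, hφ, LinearMap.pi_apply, hik] using this
  · intro j hkj
    have h0 : L (a - b) = 0 := by rw [map_sub, hab, sub_self]
    have := congrFun h0 ⟨j, hkj.ne'⟩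
    have hnlt : ¬ (j < k) := not_lt.mpr hkj.le
    simpa [hL, hφ, LinearMap.pi_apply, hnlt, Matrix.mulVecLin_apply] using this

lemma jensen {f : ℝ → ℝ} (hf : ConvexOn ℝ Set.univ f) {A : Matrix (Fin n) (Fin n) ℂ}
    (hA : A.IsHermitian) {x : Fin n → ℂ} (hx : nrm2 x = 1) :
    ∃ a b : ℝ, star x ⬝ᵥ (A *ᵥ x) = (a : ℂ) ∧ star x ⬝ᵥ (cfc f A *ᵥ x) = (b : ℂ) ∧ f a ≤ b := by
  obtain ⟨V, hV, hVg⟩ := perm_spectral hA (Equiv.refl (Fin n))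
  have hV1 : Vᴴ * V = 1 := by
    rw [← star_eq_conjTranspose]; exact Matrix.mem_unitaryGroup_iff'.mp hV
  have hV2 : V * Vᴴ = 1 := by
    rw [← star_eq_conjTranspose]; exact Matrix.mem_unitaryGroup_iff.mp hV
  set α : Fin n → ℝ := hA.eigenvalues ∘ ⇑(Equiv.refl (Fin n)) with hα
  set e : Fin n → ℂ := Vᴴ *ᵥ x with he
  have hxe : x = V *ᵥ e := by rw [he, mulVec_mulVec, hV2, one_mulVec]
  set t : Fin n → ℝ := fun i => Complex.normSq (e i) with ht
  have ht1 : ∑ i, t i = 1 := by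
    have hmm : Vᴴᴴ * Vᴴ = 1 := by rw [conjTranspose_conjTranspose]; exact hV2
    have : nrm2 e = nrm2 x := by rw [he]; exact nrm2_mulVec Vᴴ hmm x
    rw [← hx, ← this]; rfl
  have hquad : ∀ g : ℝ → ℝ, star x ⬝ᵥ (cfc g A *ᵥ x) = ((∑ i, g (α i) * t i : ℝ) : ℂ) := by
    intro g
    rw [hxe, hVg g]
    rw [quad V hV1 (g ∘ α) e]
    rfl
  have hAid : A = cfc (fun r : ℝ => r) A := (cfc_id ℝ A hA).symm
  refine ⟨∑ i, α i * t i, ∑ i, f (α i) * t i, ?_, ?_, ?_⟩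
  · rw [hAid, hquad (fun r => r)]
  · exact hquad f
  · have := hf.map_sum_le (t := Finset.univ) (w := t) (p := α)
      (fun i _ => Complex.normSq_nonneg _) ht1 (fun i _ => Set.mem_univ _)
    calc f (∑ i, α i * t i) = f (∑ i, t i • α i) := by
          congr 1; exact Finset.sum_congr rfl fun i _ => by rw [smul_eq_mul, mul_comm]
      _ ≤ ∑ i, t i • f (α i) := this
      _ = ∑ i, f (α i) * t i := Finset.sum_congr rfl fun i _ => by rw [smul_eq_mul, mul_comm]


lemma sum_mul_le (g t : Fin n → ℝ) (k : Fin n) (h0 : ∀ i, 0 ≤ t i) (h1 : ∑ i, t i = 1)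
    (hb : ∀ i, t i ≠ 0 → g i ≤ g k) : ∑ i, g i * t i ≤ g k := by
  calc ∑ i, g i * t i ≤ ∑ i, g k * t i := by
        refine Finset.sum_le_sum fun i _ => ?_
        by_cases h : t i = 0
        · simp [h]
        · exact mul_le_mul_of_nonneg_right (hb i h) (h0 i)
    _ = g k := by rw [← Finset.mul_sum, h1, mul_one]

lemma le_sum_mul (g t : Fin n → ℝ) (k : Fin n) (h0 : ∀ i, 0 ≤ t i) (h1 : ∑ i, t i = 1)
    (hb : ∀ i, t i ≠ 0 → g k ≤ g i) : g k ≤ ∑ i, g i * t i := by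
  have := sum_mul_le (fun i => -g i) t k h0 h1 (fun i h => neg_le_neg (hb i h))
  simp only [neg_mul, Finset.sum_neg_distrib] at this
  linarith

lemma dot_smul_add (P Q : Matrix (Fin n) (Fin n) ℂ) (x : Fin n → ℂ) :
    star x ⬝ᵥ (((2 : ℂ)⁻¹ • (P + Q)) *ᵥ x)
      = 2⁻¹ * (star x ⬝ᵥ (P *ᵥ x)) + 2⁻¹ * (star x ⬝ᵥ (Q *ᵥ x)) := by
  rw [smul_mulVec, add_mulVec, dotProduct_smul, dotProduct_add]
  simp [smul_eq_mul, mul_add]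

lemma key_ineq (hn : 1 ≤ n) {f : ℝ → ℝ} (hf : ConvexOn ℝ Set.univ f)
    {A B : Matrix (Fin n) (Fin n) ℂ} (hA : A.IsHermitian) (hB : B.IsHermitian)
    {V W : Matrix (Fin n) (Fin n) ℂ}
    (hV : V ∈ Matrix.unitaryGroup (Fin n) ℂ) (hW : W ∈ Matrix.unitaryGroup (Fin n) ℂ)
    {μ ν : Fin n → ℝ} (hν : Monotone ν)
    (hXeq : (2 : ℂ)⁻¹ • (A + B) = V * diagonal (Complex.ofReal ∘ μ) * Vᴴ)
    (hYeq : (2 : ℂ)⁻¹ • (cfc f A + cfc f B) = W * diagonal (Complex.ofReal ∘ ν) * Wᴴ)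
    (hstep : ∀ (k : Fin n) (t : Fin n → ℝ), (∀ i, 0 ≤ t i) → (∑ i, t i) = 1 →
      (∀ i, i < k → t i = 0) → f (μ k) ≤ f (∑ i, μ i * t i)) :
    ∀ k, f (μ k) ≤ ν k := by
  intro k
  have hV1 : Vᴴ * V = 1 := by
    rw [← star_eq_conjTranspose]; exact Matrix.mem_unitaryGroup_iff'.mp hV
  have hW1 : Wᴴ * W = 1 := by
    rw [← star_eq_conjTranspose]; exact Matrix.mem_unitaryGroup_iff'.mp hW
  have hW2 : W * Wᴴ = 1 := by
    rw [← star_eq_conjTranspose]; exact Matrix.mem_unitaryGroup_iff.mp hW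
  obtain ⟨c₀, hc0, hlow, hhigh⟩ := exists_good_vector hn (Wᴴ * V) k
  have hpos : 0 < nrm2 c₀ := by
    rcases Function.ne_iff.mp hc0 with ⟨i, hi⟩
    refine Finset.sum_pos' (fun j _ => Complex.normSq_nonneg _)
      ⟨i, Finset.mem_univ i, Complex.normSq_pos.mpr hi⟩
  set r : ℝ := (Real.sqrt (nrm2 c₀))⁻¹ with hr
  set c : Fin n → ℂ := (r : ℂ) • c₀ with hc
  have hcn : nrm2 c = 1 := by
    have h1 : nrm2 c = r * r * nrm2 c₀ := by
      simp only [nrm2, hc, Pi.smul_apply, smul_eq_mul, Complex.normSq_mul,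
        Complex.normSq_ofReal, ← Finset.mul_sum]
    rw [h1, hr, ← mul_inv, Real.mul_self_sqrt hpos.le]
    exact inv_mul_cancel₀ hpos.ne'
  have hclow : ∀ i, i < k → c i = 0 := fun i h => by simp [hc, hlow i h]
  have hchigh : ∀ j, k < j → ((Wᴴ * V) *ᵥ c) j = 0 := fun j h => by
    rw [hc, mulVec_smul]
    simp [hhigh j h]
  set x : Fin n → ℂ := V *ᵥ c with hx
  set d : Fin n → ℂ := Wᴴ *ᵥ x with hdd
  have hd : d = (Wᴴ * V) *ᵥ c := by rw [hdd, hx, mulVec_mulVec]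
  have hdhigh : ∀ j, k < j → d j = 0 := fun j h => by rw [hd]; exact hchigh j h
  have hxd : x = W *ᵥ d := by rw [hdd, mulVec_mulVec, hW2, one_mulVec]
  have hxn : nrm2 x = 1 := by rw [hx, nrm2_mulVec V hV1 c]; exact hcn
  have hdn : nrm2 d = 1 := by
    have hmm : Wᴴᴴ * Wᴴ = 1 := by rw [conjTranspose_conjTranspose]; exact hW2
    rw [hdd, nrm2_mulVec Wᴴ hmm x]; exact hxn
  set s : Fin n → ℝ := fun i => Complex.normSq (c i) with hs
  set tt : Fin n → ℝ := fun j => Complex.normSq (d j) with htt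
  have hQX : star x ⬝ᵥ (((2 : ℂ)⁻¹ • (A + B)) *ᵥ x) = ((∑ i, μ i * s i : ℝ) : ℂ) := by
    rw [hXeq, hx]; exact quad V hV1 μ c
  have hQY : star x ⬝ᵥ (((2 : ℂ)⁻¹ • (cfc f A + cfc f B)) *ᵥ x)
      = ((∑ j, ν j * tt j : ℝ) : ℂ) := by
    rw [hYeq, hxd]
    exact quad W hW1 ν d
  obtain ⟨a, a', ha, ha', hja⟩ := jensen hf hA hxn
  obtain ⟨b, b', hb, hb', hjb⟩ := jensen hf hB hxn
  have hsum : (∑ i, μ i * s i) = 2⁻¹ * a + 2⁻¹ * b := by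
    have := hQX
    rw [dot_smul_add, ha, hb] at this
    refine Complex.ofReal_injective (Eq.trans this.symm ?_)
    push_cast
    ring
  have hsum' : (∑ j, ν j * tt j) = 2⁻¹ * a' + 2⁻¹ * b' := by
    have := hQY
    rw [dot_smul_add, ha', hb'] at this
    refine Complex.ofReal_injective (Eq.trans this.symm ?_)
    push_cast
    ring
  have hmid : f (2⁻¹ * a + 2⁻¹ * b) ≤ 2⁻¹ * f a + 2⁻¹ * f b := by
    have := hf.2 (Set.mem_univ a) (Set.mem_univ b)
      (by norm_num : (0:ℝ) ≤ 2⁻¹) (by norm_num : (0:ℝ) ≤ 2⁻¹) (by norm_num)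
    simpa [smul_eq_mul] using this
  have hsupp : ∀ i, i < k → s i = 0 := fun i h => by simp [hs, hclow i h]
  have hssum : (∑ i, s i) = 1 := hcn
  have httsum : (∑ j, tt j) = 1 := hdn
  have hstep' := hstep k s (fun i => Complex.normSq_nonneg _) hssum hsupp
  have hbound : (∑ j, ν j * tt j) ≤ ν k := by
    refine sum_mul_le ν tt k (fun j => Complex.normSq_nonneg _) httsum fun j hj => ?_
    by_cases h : j ≤ k
    · exact hν h
    · exact absurd (by simp [htt, hdhigh j (not_le.mp h)]) hj
  rw [hsum] at hstep'
  linarith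


lemma herm_half_add {P Q : Matrix (Fin n) (Fin n) ℂ} (hP : P.IsHermitian)
    (hQ : Q.IsHermitian) : ((2 : ℂ)⁻¹ • (P + Q)).IsHermitian := by
  have hst : star ((2 : ℂ)⁻¹) = (2 : ℂ)⁻¹ := by simp
  unfold Matrix.IsHermitian
  rw [conjTranspose_smul, conjTranspose_add, hP.eq, hQ.eq, hst]

lemma fin_rev_antitone : Antitone (Fin.rev : Fin n → Fin n) :=
  fun _ _ h => Fin.rev_le_rev.mpr h

end BourinAux

open BourinAux in
/-- Result 1.4: for monotone convex `f : ℝ → ℝ` and Hermitians `A`, `B`, there is a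
unitary `U` with `f((A+B)/2) ≤ U ((f(A)+f(B))/2) Uᴴ` in the Loewner order. -/
theorem exists_unitary_cfc_midpoint_le {n : ℕ} (hn : 1 ≤ n) (f : ℝ → ℝ)
    (hf : ConvexOn ℝ Set.univ f) (hmono : Monotone f ∨ Antitone f)
    (A B : Matrix (Fin n) (Fin n) ℂ) (hA : A.IsHermitian) (hB : B.IsHermitian) :
    ∃ U ∈ Matrix.unitaryGroup (Fin n) ℂ,
      (U * ((2 : ℂ)⁻¹ • (cfc f A + cfc f B)) * Uᴴ
        - cfc f ((2 : ℂ)⁻¹ • (A + B))).PosSemidef := by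
  classical
  set X : Matrix (Fin n) (Fin n) ℂ := (2 : ℂ)⁻¹ • (A + B) with hXdef
  set Y : Matrix (Fin n) (Fin n) ℂ := (2 : ℂ)⁻¹ • (cfc f A + cfc f B) with hYdef
  have hX : X.IsHermitian := herm_half_add hA hB
  have hfA : (cfc f A).IsHermitian := cfc_predicate f A
  have hfB : (cfc f B).IsHermitian := cfc_predicate f B
  have hY : Y.IsHermitian := herm_half_add hfA hfB
  have main : ∃ (V W : Matrix (Fin n) (Fin n) ℂ) (μ ν : Fin n → ℝ),
      V ∈ Matrix.unitaryGroup (Fin n) ℂ ∧ W ∈ Matrix.unitaryGroup (Fin n) ℂ ∧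
      (∀ g : ℝ → ℝ, cfc g X = V * diagonal (Complex.ofReal ∘ g ∘ μ) * Vᴴ) ∧
      Y = W * diagonal (Complex.ofReal ∘ ν) * Wᴴ ∧ (∀ k, f (μ k) ≤ ν k) := by
    -- decomposition of Y, sorted increasing
    obtain ⟨W, hW, hWg⟩ := perm_spectral hY (Tuple.sort hY.eigenvalues)
    set ν : Fin n → ℝ := hY.eigenvalues ∘ ⇑(Tuple.sort hY.eigenvalues) with hνdef
    have hν : Monotone ν := Tuple.monotone_sort _
    have hYeq : Y = W * diagonal (Complex.ofReal ∘ ν) * Wᴴ := by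
      exact (cfc_id' ℝ Y hY).symm.trans (hWg fun r => r)
    rcases hmono with hm | hm
    · -- monotone case : sort μ increasing
      obtain ⟨V, hV, hVg⟩ := perm_spectral hX (Tuple.sort hX.eigenvalues)
      set μ : Fin n → ℝ := hX.eigenvalues ∘ ⇑(Tuple.sort hX.eigenvalues) with hμdef
      have hμ : Monotone μ := Tuple.monotone_sort _
      have hXeq : X = V * diagonal (Complex.ofReal ∘ μ) * Vᴴ := by
        exact (cfc_id' ℝ X hX).symm.trans (hVg fun r => r)
      refine ⟨V, W, μ, ν, hV, hW, hVg, hYeq, ?_⟩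
      refine key_ineq hn hf hA hB hV hW hν hXeq hYeq ?_
      intro k t h0 h1 hsupp
      refine hm (le_sum_mul μ t k h0 h1 fun i hi => ?_)
      by_cases h : i < k
      · exact absurd (hsupp i h) hi
      · exact hμ (not_lt.mp h)
    · -- antitone case : sort μ decreasing
      obtain ⟨V, hV, hVg⟩ :=
        perm_spectral hX (Fin.revPerm.trans (Tuple.sort hX.eigenvalues))
      set μ : Fin n → ℝ :=
        hX.eigenvalues ∘ ⇑(Fin.revPerm.trans (Tuple.sort hX.eigenvalues)) with hμdef
      have hμ : Antitone μ := by
        have h1 : μ = (hX.eigenvalues ∘ ⇑(Tuple.sort hX.eigenvalues)) ∘ Fin.rev := rfl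
        rw [h1]
        exact (Tuple.monotone_sort _).comp_antitone fin_rev_antitone
      have hXeq : X = V * diagonal (Complex.ofReal ∘ μ) * Vᴴ := by
        exact (cfc_id' ℝ X hX).symm.trans (hVg fun r => r)
      refine ⟨V, W, μ, ν, hV, hW, hVg, hYeq, ?_⟩
      refine key_ineq hn hf hA hB hV hW hν hXeq hYeq ?_
      intro k t h0 h1 hsupp
      refine hm (sum_mul_le μ t k h0 h1 fun i hi => ?_)
      by_cases h : i < k
      · exact absurd (hsupp i h) hi
      · exact hμ (not_lt.mp h)
  obtain ⟨V, W, μ, ν, hV, hW, hVg, hYeq, key⟩ := main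
  have hW1 : Wᴴ * W = 1 := by
    rw [← star_eq_conjTranspose]; exact Matrix.mem_unitaryGroup_iff'.mp hW
  refine ⟨V * Wᴴ, ?_, ?_⟩
  · refine mul_mem hV ?_
    rw [← star_eq_conjTranspose]
    exact Unitary.star_mem hW
  · have hcfcX : cfc f X = V * diagonal (Complex.ofReal ∘ f ∘ μ) * Vᴴ := hVg f
    have hE : V * Wᴴ * Y * (V * Wᴴ)ᴴ = V * diagonal (Complex.ofReal ∘ ν) * Vᴴ := by
      rw [hYeq, conjTranspose_mul, conjTranspose_conjTranspose]
      simp only [mul_assoc]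
      rw [← mul_assoc Wᴴ W, hW1, one_mul, ← mul_assoc Wᴴ W, hW1, one_mul]
    rw [hE, hcfcX, ← sub_mul, ← mul_sub, diagonal_sub]
    refine Matrix.PosSemidef.mul_mul_conjTranspose_same ?_ V
    refine posSemidef_diagonal_iff.mpr fun i => ?_
    have : ((0 : ℝ) : ℂ) ≤ ((ν i - f (μ i) : ℝ) : ℂ) := by
      rw [Complex.real_le_real]
      linarith [key i]
    simpa [Pi.sub_apply, Function.comp, Complex.ofReal_sub] using this
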